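/- With notation as in the support-vector independence test: if ⟨C̄_k, S̄_l⟩ = 1 evidences the independence of cycle C_k, then the updated vectors S̄'ⱼ = S̄ⱼ if ⟨C̄_k, S̄ⱼ⟩ = 0 and S̄'ⱼ = S̄ⱼ + S̄_l if ⟨C̄_k, S̄ⱼ⟩ = 1 (for j ≠ l) form a basis of the orthogonal complement of span{C̄₁, ..., C̄_k}. -/

import Mathlib

open Finset
open scoped Classical

/-- The GF(2) inner product. -/
noncomputable def dotGF {ι : Type*} [Fintype ι] (x y : ι → ZMod 2) : ZMod 2 :=
  ∑ i, x i * y i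

/-- Orthogonal complement with respect to the GF(2) inner product. -/
noncomputable def orthComp {ι : Type*} [Fintype ι]
    (U : Submodule (ZMod 2) (ι → ZMod 2)) : Submodule (ZMod 2) (ι → ZMod 2) where
  carrier := {x | ∀ y ∈ U, dotGF x y = 0}
  add_mem' := by
    intro a b ha hb y hy
    have h1 := ha y hy
    have h2 := hb y hy
    simp only [dotGF] at h1 h2 ⊢
    simp [Pi.add_apply, add_mul, Finset.sum_add_distrib, h1, h2]
  zero_mem' := by
    intro y hy
    simp [dotGF]
  smul_mem' := by
    intro c a ha y hy
    have h1 := ha y hy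
    simp only [dotGF] at h1 ⊢
    simp [Pi.smul_apply, smul_eq_mul, mul_assoc, ← Finset.mul_sum, h1]

section Aux
variable {ν : Type*} [Fintype ν]

lemma dotGF_comm (x y : ν → ZMod 2) : dotGF x y = dotGF y x := by
  simp [dotGF, mul_comm]

lemma dotGF_add_right (x y z : ν → ZMod 2) :
    dotGF x (y + z) = dotGF x y + dotGF x z := by
  simp [dotGF, mul_add, Finset.sum_add_distrib]

lemma dotGF_add_left (x y z : ν → ZMod 2) :
    dotGF (x + y) z = dotGF x z + dotGF y z := by
  simp [dotGF, add_mul, Finset.sum_add_distrib]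

lemma dotGF_smul_right (c : ZMod 2) (x y : ν → ZMod 2) :
    dotGF x (c • y) = c * dotGF x y := by
  simp [dotGF, Finset.mul_sum, mul_left_comm]

lemma dotGF_smul_left (c : ZMod 2) (x y : ν → ZMod 2) :
    dotGF (c • x) y = c * dotGF x y := by
  simp [dotGF, Finset.mul_sum, mul_assoc]

lemma dotGF_sum_right {α : Type*} (s : Finset α) (x : ν → ZMod 2) (f : α → ν → ZMod 2) :
    dotGF x (∑ i ∈ s, f i) = ∑ i ∈ s, dotGF x (f i) := by
  classical
  induction s using Finset.induction with
  | empty => simp [dotGF]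
  | insert _ _ h ih => simp [Finset.sum_insert h, dotGF_add_right, ih]

lemma mem_orthComp {U : Submodule (ZMod 2) (ν → ZMod 2)} {x : ν → ZMod 2} :
    x ∈ orthComp U ↔ ∀ y ∈ U, dotGF x y = 0 := Iff.rfl

lemma mem_orthComp_span_iff {s : Set (ν → ZMod 2)} {x : ν → ZMod 2} :
    x ∈ orthComp (Submodule.span (ZMod 2) s) ↔ ∀ y ∈ s, dotGF x y = 0 := by
  constructor
  · intro h y hy
    exact h y (Submodule.subset_span hy)
  · intro h y hy
    induction hy using Submodule.span_induction with
    | mem z hz => exact h z hz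
    | zero => simp [dotGF]
    | add a b _ _ ha hb => rw [dotGF_add_right, ha, hb, add_zero]
    | smul c a _ ha => rw [dotGF_smul_right, ha, mul_zero]
end Aux

/-- Support-vector update: vectors over GF(2)^ν.  `C₁, …, C_{k-1}` are linearly
independent, `{S j}` is a basis of the orthogonal complement of their span, and
`S l` satisfies `⟨C_k, S l⟩ = 1` (evidencing the independence of `C_k`).  Then the
updated vectors `S' j = S j` if `⟨C_k, S j⟩ = 0`, and `S' j = S j + S l` if
`⟨C_k, S j⟩ = 1` (for `j ≠ l`), form a basis of the orthogonal complement of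
`span{C₁, …, C_k}`. -/
theorem support_vector_update {n : Type*} [Fintype n]
    {k : ℕ} (C : Fin k → (n → ZMod 2)) (Ck : n → ZMod 2)
    (hC : LinearIndependent (ZMod 2) C)
    {ι : Type*} [Fintype ι] (S : ι → (n → ZMod 2))
    (hSind : LinearIndependent (ZMod 2) S)
    (hSspan : Submodule.span (ZMod 2) (Set.range S) =
      orthComp (Submodule.span (ZMod 2) (Set.range C)))
    (l : ι) (hl : dotGF Ck (S l) = 1) :
    LinearIndependent (ZMod 2)
        (fun j : {j : ι // j ≠ l} =>
          if dotGF Ck (S j.1) = 0 then S j.1 else S j.1 + S l) ∧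
      Submodule.span (ZMod 2)
          (Set.range fun j : {j : ι // j ≠ l} =>
            if dotGF Ck (S j.1) = 0 then S j.1 else S j.1 + S l) =
        orthComp (Submodule.span (ZMod 2) (Set.range C ∪ {Ck})) := by
  have h2 : ∀ a : ZMod 2, a = 0 ∨ a = 1 := by decide
  -- rewrite the updated vectors in uniform form
  have hS' : (fun j : {j : ι // j ≠ l} =>
      if dotGF Ck (S j.1) = 0 then S j.1 else S j.1 + S l) =
      fun j : {j : ι // j ≠ l} => S j.1 + dotGF Ck (S j.1) • S l := by
    funext j
    rcases h2 (dotGF Ck (S j.1)) with h | h <;> simp [h]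
  -- the linear map E x = x + ⟨Ck, x⟩ • S l
  let E : (n → ZMod 2) →ₗ[ZMod 2] (n → ZMod 2) :=
    { toFun := fun x => x + dotGF Ck x • S l
      map_add' := by
        intro a b
        show a + b + dotGF Ck (a + b) • S l = (a + dotGF Ck a • S l) + (b + dotGF Ck b • S l)
        rw [dotGF_add_right, add_smul]
        abel
      map_smul' := by
        intro c a
        simp only [RingHom.id_apply]
        rw [dotGF_smul_right, mul_smul, smul_add] }
  have hEapp : ∀ x, E x = x + dotGF Ck x • S l := fun _ => rfl
  have hcomp : (fun j : {j : ι // j ≠ l} => S j.1 + dotGF Ck (S j.1) • S l) =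
      ⇑E ∘ (S ∘ Subtype.val) := rfl
  -- linear independence
  have hsubind : LinearIndependent (ZMod 2) (S ∘ (Subtype.val : {j : ι // j ≠ l} → ι)) :=
    hSind.comp _ Subtype.val_injective
  have hrange : Set.range (S ∘ (Subtype.val : {j : ι // j ≠ l} → ι)) =
      S '' {j : ι | j ≠ l} := by
    rw [Set.range_comp, Subtype.range_coe_subtype]
  have hdisj : Disjoint (Submodule.span (ZMod 2)
      (Set.range (S ∘ (Subtype.val : {j : ι // j ≠ l} → ι)))) (LinearMap.ker E) := by
    rw [Submodule.disjoint_def]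
    intro x hx hker
    rw [LinearMap.mem_ker, hEapp] at hker
    have hx2 : x = dotGF Ck x • S l := by
      have h := eq_neg_of_add_eq_zero_left hker
      rwa [← neg_smul, CharTwo.neg_eq] at h
    have hxl : x ∈ Submodule.span (ZMod 2) (S '' ({l} : Set ι)) := by
      rw [hx2]
      exact Submodule.smul_mem _ _ (Submodule.subset_span ⟨l, rfl, rfl⟩)
    have hdisj' := hSind.disjoint_span_image
      (s := {j : ι | j ≠ l}) (t := {l}) (by simp [Set.disjoint_left])
    rw [hrange] at hx
    exact (Submodule.disjoint_def.mp hdisj') x hx hxl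
  have hind : LinearIndependent (ZMod 2)
      (fun j : {j : ι // j ≠ l} =>
        if dotGF Ck (S j.1) = 0 then S j.1 else S j.1 + S l) := by
    rw [hS', hcomp]
    exact hsubind.map hdisj
  refine ⟨hind, ?_⟩
  -- basic orthogonality facts
  have hSorth : ∀ i : ι, ∀ y ∈ Set.range C, dotGF (S i) y = 0 := by
    intro i y hy
    have : S i ∈ orthComp (Submodule.span (ZMod 2) (Set.range C)) := by
      rw [← hSspan]; exact Submodule.subset_span ⟨i, rfl⟩
    exact this y (Submodule.subset_span hy)
  -- span equality
  rw [hS']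
  apply le_antisymm
  · rw [Submodule.span_le]
    rintro _ ⟨j, rfl⟩
    rw [SetLike.mem_coe, mem_orthComp_span_iff]
    rintro y (hy | hy)
    · rw [dotGF_add_left, dotGF_smul_left, hSorth j.1 y hy, hSorth l y hy,
        mul_zero, add_zero]
    · rw [Set.mem_singleton_iff] at hy
      rw [hy]
      rw [dotGF_add_left, dotGF_smul_left, dotGF_comm (S l) Ck, hl, mul_one,
        dotGF_comm (S j.1) Ck]
      exact CharTwo.add_self_eq_zero _
  · intro x hx
    have hx1 : x ∈ Submodule.span (ZMod 2) (Set.range S) := by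
      rw [hSspan, mem_orthComp_span_iff]
      intro y hy
      exact (mem_orthComp_span_iff.mp hx) y (Or.inl hy)
    have hx2 : dotGF Ck x = 0 := by
      rw [dotGF_comm]
      exact (mem_orthComp_span_iff.mp hx) Ck (Or.inr rfl)
    obtain ⟨a, ha⟩ := (Submodule.mem_span_range_iff_exists_fun (ZMod 2)).mp hx1
    -- key coefficient identity
    have hkey : a l + ∑ i ∈ Finset.univ.erase l, a i * dotGF Ck (S i) = 0 := by
      have h1 : dotGF Ck x = ∑ i, a i * dotGF Ck (S i) := by
        rw [← ha, dotGF_sum_right]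
        exact Finset.sum_congr rfl fun i _ => dotGF_smul_right _ _ _
      have h2' : (∑ i, a i * dotGF Ck (S i)) =
          a l * dotGF Ck (S l) + ∑ i ∈ Finset.univ.erase l, a i * dotGF Ck (S i) :=
        (Finset.add_sum_erase _ _ (Finset.mem_univ l)).symm
      rw [h1, h2', hl, mul_one] at hx2
      exact hx2
    have hcoef : ∑ i ∈ Finset.univ.erase l, a i * dotGF Ck (S i) = a l := by
      rcases h2 (a l) with h | h <;>
        rcases h2 (∑ i ∈ Finset.univ.erase l, a i * dotGF Ck (S i)) with h' | h' <;>
        rw [h, h'] <;> rw [h, h'] at hkey <;> revert hkey <;> decide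
    rw [Submodule.mem_span_range_iff_exists_fun (ZMod 2)]
    refine ⟨fun j => a j.1, ?_⟩
    have hsub : ∀ f : ι → (n → ZMod 2),
        ∑ j : {j : ι // j ≠ l}, f j.1 = ∑ i ∈ Finset.univ.erase l, f i := by
      intro f
      exact (Finset.sum_subtype _ (fun x => by simp) f).symm
    calc ∑ j : {j : ι // j ≠ l}, a j.1 • (S j.1 + dotGF Ck (S j.1) • S l)
        = ∑ i ∈ Finset.univ.erase l, a i • (S i + dotGF Ck (S i) • S l) :=
          hsub (fun i => a i • (S i + dotGF Ck (S i) • S l))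
      _ = ∑ i ∈ Finset.univ.erase l, a i • S i +
            (∑ i ∈ Finset.univ.erase l, a i * dotGF Ck (S i)) • S l := by
          rw [Finset.sum_smul]
          rw [← Finset.sum_add_distrib]
          exact Finset.sum_congr rfl fun i _ => by rw [smul_add, smul_smul]
      _ = ∑ i ∈ Finset.univ.erase l, a i • S i + a l • S l := by rw [hcoef]
      _ = a l • S l + ∑ i ∈ Finset.univ.erase l, a i • S i := by rw [add_comm]
      _ = ∑ i, a i • S i := Finset.add_sum_erase _ (fun i => a i • S i) (Finset.mem_univ l)
      _ = x := ha
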